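/- Let α, β, γ, δ, a, b be real numbers. If Y(a)·Z(π−α)·Y(a)·Z(π−β)·Y(a)·Z(π−γ)·Y(b)·Z(π−δ) equals the 3×3 identity matrix, then (cos γ − cos δ)·sin b = (cos α − cos β)·sin a; if moreover sin b ≠ 0, then sin(α/2)·sin(δ − β/2) = sin(β/2)·sin(γ − α/2). -/
import Mathlib


open Real

/-- Rotation about the `y`-axis by angle `t`. -/
noncomputable def Yrot (t : ℝ) : Matrix (Fin 3) (Fin 3) ℝ :=
  !![Real.cos t, 0, Real.sin t; 0, 1, 0; -Real.sin t, 0, Real.cos t]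

/-- Rotation about the `z`-axis by angle `t`. -/
noncomputable def Zrot (t : ℝ) : Matrix (Fin 3) (Fin 3) ℝ :=
  !![Real.cos t, -Real.sin t, 0; Real.sin t, Real.cos t, 0; 0, 0, 1]

set_option maxHeartbeats 1600000 in
set_option maxRecDepth 4000 in
/-- Equalities (14) and (6) in the proof of Lemma 3.12: the closed-path rotation
identity implies `(cos γ - cos δ) sin b = (cos α - cos β) sin a`, and if `sin b ≠ 0`
it implies Coolsaet's equality. -/
theorem stmt_7 (α β γ δ a b : ℝ)
    (h : Yrot a * Zrot (π - α) * Yrot a * Zrot (π - β) * Yrot a * Zrot (π - γ) *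
      Yrot b * Zrot (π - δ) = 1) :
    (Real.cos γ - Real.cos δ) * Real.sin b = (Real.cos α - Real.cos β) * Real.sin a ∧
    (Real.sin b ≠ 0 →
      Real.sin (α / 2) * Real.sin (δ - β / 2) =
        Real.sin (β / 2) * Real.sin (γ - α / 2)) := by
  have hZ : ∀ t : ℝ, Zrot t * Zrot (-t) = 1 := by
    intro t
    ext i j
    fin_cases i <;> fin_cases j <;>
      simp [Zrot, Matrix.mul_apply, Fin.sum_univ_three, Matrix.one_apply] <;>
      nlinarith [Real.sin_sq_add_cos_sq t]
  have hY : ∀ t : ℝ, Yrot t * Yrot (-t) = 1 := by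
    intro t
    ext i j
    fin_cases i <;> fin_cases j <;>
      simp [Yrot, Matrix.mul_apply, Fin.sum_univ_three, Matrix.one_apply] <;>
      nlinarith [Real.sin_sq_add_cos_sq t]
  have hZδ : ∀ X : Matrix (Fin 3) (Fin 3) ℝ, Zrot (π - δ) * (Zrot (δ - π) * X) = X := by
    intro X
    rw [← mul_assoc, show (δ - π) = -(π - δ) by ring, hZ, one_mul]
  have hYb : ∀ X : Matrix (Fin 3) (Fin 3) ℝ, Yrot b * (Yrot (-b) * X) = X := by
    intro X
    rw [← mul_assoc, hY, one_mul]
  have hZγ : Zrot (π - γ) * Zrot (γ - π) = 1 := by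
    rw [show (γ - π) = -(π - γ) by ring, hZ]
  have key := congrArg (fun X => X * (Zrot (δ - π) * (Yrot (-b) * Zrot (γ - π)))) h
  simp only [one_mul, mul_assoc, hZδ, hYb] at key
  rw [hZγ, mul_one] at key
  -- key : Yrot a * (Zrot (π-α) * (Yrot a * (Zrot (π-β) * Yrot a))) = Zrot (δ-π) * (Yrot (-b) * Zrot (γ-π))
  have k02 := congrFun (congrFun key 0) 2
  have k12 := congrFun (congrFun key 1) 2
  have k20 := congrFun (congrFun key 2) 0
  have k21 := congrFun (congrFun key 2) 1
  simp [Yrot, Zrot, Matrix.mul_apply, Fin.sum_univ_three, Real.cos_pi_sub,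
    Real.sin_pi_sub, Real.cos_sub_pi, Real.sin_sub_pi] at k02
  simp [Yrot, Zrot, Matrix.mul_apply, Fin.sum_univ_three, Real.cos_pi_sub,
    Real.sin_pi_sub, Real.cos_sub_pi, Real.sin_sub_pi] at k12
  simp [Yrot, Zrot, Matrix.mul_apply, Fin.sum_univ_three, Real.cos_pi_sub,
    Real.sin_pi_sub, Real.cos_sub_pi, Real.sin_sub_pi] at k20
  simp [Yrot, Zrot, Matrix.mul_apply, Fin.sum_univ_three, Real.cos_pi_sub,
    Real.sin_pi_sub, Real.cos_sub_pi, Real.sin_sub_pi] at k21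
  constructor
  · linear_combination k02 + k20 +
      (Real.sin a * (Real.cos α - Real.cos β)) * (Real.sin_sq_add_cos_sq a)
  · intro hb
    have hs1 : Real.sin α = 2 * Real.sin (α/2) * Real.cos (α/2) := by
      have := Real.sin_two_mul (α/2); rwa [show 2*(α/2) = α by ring] at this
    have hs2 : Real.sin β = 2 * Real.sin (β/2) * Real.cos (β/2) := by
      have := Real.sin_two_mul (β/2); rwa [show 2*(β/2) = β by ring] at this
    have hc1 : Real.cos α = 1 - 2 * Real.sin (α/2)^2 := by
      have h1 := Real.cos_two_mul (α/2)
      have p1 := Real.sin_sq_add_cos_sq (α/2)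
      rw [show 2*(α/2) = α by ring] at h1; linarith
    have hc2 : Real.cos β = 1 - 2 * Real.sin (β/2)^2 := by
      have h1 := Real.cos_two_mul (β/2)
      have p1 := Real.sin_sq_add_cos_sq (β/2)
      rw [show 2*(β/2) = β by ring] at h1; linarith
    rw [hs1, hs2, hc1, hc2] at k02 k12 k20 k21
    apply mul_left_cancel₀ hb
    rw [Real.sin_sub, Real.sin_sub]
    linear_combination
      (-(Real.sin (α/2) * Real.cos (β/2))) * k12 +
      (Real.sin (α/2) * Real.sin (β/2)) * k02 +
      (Real.sin (β/2) * Real.cos (α/2)) * k21 +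
      (Real.sin (β/2) * Real.sin (α/2)) * k20 +
      (2*Real.sin a*Real.sin (α/2)*Real.sin (β/2)^3 - 2*Real.sin a*Real.sin (α/2)^3*Real.sin (β/2)) * (Real.sin_sq_add_cos_sq a) +
      (2*Real.sin a*Real.sin (α/2)*Real.sin (β/2) - 4*Real.sin a*Real.sin (α/2)*Real.sin (β/2)^3) * (Real.sin_sq_add_cos_sq (α/2)) +
      (-2*Real.sin a*Real.sin (α/2)*Real.sin (β/2) + 4*Real.sin a*Real.sin (α/2)^3*Real.sin (β/2)) * (Real.sin_sq_add_cos_sq (β/2))
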